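/- Let α > 0, let τ ≥ 1, and for i = 1, …, τ let q_i ∈ ℝ^d and β_i ∈ ℝ. Define A := (√α I + β_1 q_1 q_1ᵀ)(√α I + β_2 q_2 q_2ᵀ) ⋯ (√α I + β_τ q_τ q_τᵀ). Then the matrix A − α^{τ/2} I has rank at most τ, and consequently the matrix A Aᵀ − α^τ I has rank at most 2τ. -/

import Mathlib

open Matrix

lemma my_rank_add_le {d : ℕ} (A B : Matrix (Fin d) (Fin d) ℝ) :
    (A + B).rank ≤ A.rank + B.rank := by
  rw [Matrix.rank, Matrix.rank, Matrix.rank, Matrix.mulVecLin_add]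
  have h : LinearMap.range (A.mulVecLin + B.mulVecLin) ≤
      LinearMap.range A.mulVecLin ⊔ LinearMap.range B.mulVecLin := by
    rintro x ⟨y, rfl⟩
    exact Submodule.add_mem_sup ⟨y, rfl⟩ ⟨y, rfl⟩
  exact (Submodule.finrank_mono h).trans
    (Submodule.finrank_add_le_finrank_add_finrank _ _)

lemma my_rank_smul_le {d : ℕ} (c : ℝ) (A : Matrix (Fin d) (Fin d) ℝ) :
    (c • A).rank ≤ A.rank := by
  have : c • A = (c • (1 : Matrix (Fin d) (Fin d) ℝ)) * A := by
    rw [Matrix.smul_mul, Matrix.one_mul]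
  rw [this]
  exact Matrix.rank_mul_le_right _ _

lemma my_rank_vecMulVec_le {d : ℕ} (w v : Fin d → ℝ) :
    (Matrix.vecMulVec w v).rank ≤ 1 := by
  rw [Matrix.vecMulVec_eq (Fin 1)]
  exact (Matrix.rank_mul_le_left _ _).trans
    ((Matrix.rank_le_card_width _).trans (by simp))

lemma prod_sub_smul_one_rank_le {d : ℕ} (s : ℝ)
    (l : List (Matrix (Fin d) (Fin d) ℝ))
    (h : ∀ M ∈ l, ∃ R : Matrix (Fin d) (Fin d) ℝ,
        M = s • 1 + R ∧ R.rank ≤ 1) :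
    (l.prod - s ^ l.length • (1 : Matrix (Fin d) (Fin d) ℝ)).rank ≤ l.length := by
  induction l with
  | nil => simp
  | cons a l ih =>
    obtain ⟨R, rfl, hR⟩ := h a List.mem_cons_self
    have ih' := ih (fun M hM => h M (List.mem_cons_of_mem _ hM))
    have key : (s • 1 + R) * l.prod - s ^ (List.length l + 1) • (1 : Matrix (Fin d) (Fin d) ℝ) =
        s • (l.prod - s ^ l.length • (1 : Matrix (Fin d) (Fin d) ℝ)) + R * l.prod := by
      rw [Matrix.add_mul, Matrix.smul_mul, Matrix.one_mul, smul_sub, smul_smul, pow_succ,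
        mul_comm (s ^ l.length) s]
      abel
    simp only [List.prod_cons, List.length_cons]
    rw [key]
    calc (s • (l.prod - s ^ l.length • (1 : Matrix (Fin d) (Fin d) ℝ)) + R * l.prod).rank
        ≤ (s • (l.prod - s ^ l.length • (1 : Matrix (Fin d) (Fin d) ℝ))).rank
          + (R * l.prod).rank := my_rank_add_le _ _
      _ ≤ l.length + 1 := by
          gcongr
          · exact (my_rank_smul_le _ _).trans ih'
          · exact (Matrix.rank_mul_le_left _ _).trans hR

/-- Observation 1: a product of `τ` rank-one perturbations of `√α I` differs
from `α^{τ/2} I` by a matrix of rank at most `τ`, hence `A Aᵀ − α^τ I` has rank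
at most `2τ`. -/
theorem qng_low_rank_structure (d τ : ℕ) (hτ : 1 ≤ τ) (α : ℝ) (hα : 0 < α)
    (q : Fin τ → (Fin d → ℝ)) (β : Fin τ → ℝ)
    (A : Matrix (Fin d) (Fin d) ℝ)
    (hA : A = ((List.finRange τ).map fun i =>
        Real.sqrt α • (1 : Matrix (Fin d) (Fin d) ℝ) +
          β i • Matrix.vecMulVec (q i) (q i)).prod) :
    Matrix.rank (A - (Real.sqrt α) ^ τ • (1 : Matrix (Fin d) (Fin d) ℝ)) ≤ τ ∧
      Matrix.rank (A * Aᵀ - α ^ τ • (1 : Matrix (Fin d) (Fin d) ℝ)) ≤ 2 * τ := by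
  set s := Real.sqrt α with hs
  set B := A - s ^ τ • (1 : Matrix (Fin d) (Fin d) ℝ) with hB
  have hBrank : B.rank ≤ τ := by
    rw [hB, hA]
    have := prod_sub_smul_one_rank_le s
      ((List.finRange τ).map fun i =>
        s • (1 : Matrix (Fin d) (Fin d) ℝ) + β i • Matrix.vecMulVec (q i) (q i))
      (by
        intro M hM
        simp only [List.mem_map] at hM
        obtain ⟨i, _, rfl⟩ := hM
        exact ⟨β i • Matrix.vecMulVec (q i) (q i), rfl,
          (my_rank_smul_le _ _).trans (my_rank_vecMulVec_le _ _)⟩)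
    simpa using this
  refine ⟨hBrank, ?_⟩
  have hA' : A = B + s ^ τ • 1 := by rw [hB]; abel
  have hα' : α ^ τ = (s ^ τ) ^ 2 := by
    have h2 : (s ^ τ) ^ 2 = (s ^ 2) ^ τ := by ring
    rw [h2, hs, Real.sq_sqrt hα.le]
  have key : A * Aᵀ - α ^ τ • (1 : Matrix (Fin d) (Fin d) ℝ) =
      B * Aᵀ + (s ^ τ) • Bᵀ := by
    rw [hα', hA']
    simp only [Matrix.transpose_add, Matrix.transpose_smul, Matrix.transpose_one,
      Matrix.add_mul, Matrix.mul_add, Matrix.smul_mul, Matrix.mul_smul,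
      Matrix.mul_one, Matrix.one_mul, smul_smul, smul_add, pow_two]
    abel
  rw [key]
  calc (B * Aᵀ + (s ^ τ) • Bᵀ).rank ≤ (B * Aᵀ).rank + ((s ^ τ) • Bᵀ).rank :=
        my_rank_add_le _ _
    _ ≤ τ + τ := by
        gcongr
        · exact (Matrix.rank_mul_le_left _ _).trans hBrank
        · exact (my_rank_smul_le _ _).trans ((Matrix.rank_transpose B).le.trans hBrank)
    _ = 2 * τ := by ring
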